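/- arXiv:1505.00379 — 5 statements merged into one kernel-verified Lean document; each statement's English description precedes it below -/
import Mathlib

section
/- Let s < 0 and y > 0, and set J_{d,s}(y) = ∫₀¹ d(1-t)^{d-1} (1 - s·y·t)^{1/s} dt. Then J_{d,s}(y) ≥ d/(d + y). -/
open MeasureTheory

theorem stmt_1 (d : ℕ) (hd : 1 ≤ d) (s y : ℝ) (hs : s < 0) (hy : 0 < y) :
    (d : ℝ) / (d + y) ≤
      ∫ t in (0:ℝ)..1, (d : ℝ) * (1 - t) ^ (d - 1) * (1 - s * y * t) ^ (1 / s) := by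
  have hd1 : (1:ℝ) ≤ d := by exact_mod_cast hd
  -- pointwise bound
  have hpt : ∀ t ∈ Set.Icc (0:ℝ) 1, (1 - t) ^ y ≤ (1 - s * y * t) ^ (1 / s) := by
    intro t ht
    obtain ⟨ht0, ht1⟩ := ht
    have hB : (1:ℝ) ≤ 1 - s * y * t := by
      nlinarith [mul_nonpos_of_nonpos_of_nonneg hs.le (mul_nonneg hy.le ht0)]
    have hBpos : (0:ℝ) < 1 - s * y * t := by linarith
    rcases eq_or_lt_of_le ht1 with h1 | h1
    · subst h1
      simp [Real.zero_rpow hy.ne']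
      exact Real.rpow_nonneg (by linarith) _
    · have hA : (0:ℝ) < 1 - t := by linarith
      rw [Real.rpow_def_of_pos hA, Real.rpow_def_of_pos hBpos]
      apply Real.exp_le_exp.mpr
      have hlogA : Real.log (1 - t) ≤ -t := by
        have := Real.log_le_sub_one_of_pos hA
        linarith
      have hlogB : Real.log (1 - s * y * t) ≤ -(s * y * t) := by
        have := Real.log_le_sub_one_of_pos hBpos
        linarith
      have h1s : 1 / s < 0 := one_div_neg.mpr hs
      have : 1 / s * Real.log (1 - s * y * t) ≥ 1 / s * (-(s * y * t)) := by
        exact mul_le_mul_of_nonpos_left hlogB h1s.le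
      have heq : 1 / s * (-(s * y * t)) = -(y * t) := by
        rw [one_div, ← div_eq_inv_mul, div_eq_iff hs.ne]
        ring
      nlinarith [mul_le_mul_of_nonneg_left hlogA hy.le]
  -- integrability of both
  have hcontg : ContinuousOn (fun t : ℝ => (d : ℝ) * (1 - t) ^ (d - 1) * (1 - s * y * t) ^ (1 / s))
      (Set.uIcc 0 1) := by
    apply ContinuousOn.mul
    · fun_prop
    · apply ContinuousOn.rpow_const
      · fun_prop
      · intro t ht
        left
        rw [Set.uIcc_of_le (by norm_num : (0:ℝ) ≤ 1)] at ht
        have : (1:ℝ) ≤ 1 - s * y * t := by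
          nlinarith [mul_nonpos_of_nonpos_of_nonneg hs.le (mul_nonneg hy.le ht.1)]
        intro h; rw [h] at this; linarith
  have hintg : IntervalIntegrable (fun t : ℝ => (d : ℝ) * (1 - t) ^ (d - 1) * (1 - s * y * t) ^ (1 / s))
      volume 0 1 := hcontg.intervalIntegrable
  have hcontf : ContinuousOn (fun t : ℝ => (d : ℝ) * (1 - t) ^ (d - 1) * (1 - t) ^ y)
      (Set.uIcc 0 1) := by
    apply ContinuousOn.mul
    · fun_prop
    · apply ContinuousOn.rpow_const
      · fun_prop
      · intro t ht
        right; exact hy.le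
  have hintf : IntervalIntegrable (fun t : ℝ => (d : ℝ) * (1 - t) ^ (d - 1) * (1 - t) ^ y)
      volume 0 1 := hcontf.intervalIntegrable
  -- compute the comparison integral
  have hp : (0:ℝ) < (d : ℝ) - 1 + y := by linarith
  have hkey : (∫ t in (0:ℝ)..1, (d : ℝ) * (1 - t) ^ (d - 1) * (1 - t) ^ y) = (d : ℝ) / (d + y) := by
    have heq : ∀ t ∈ Set.uIcc (0:ℝ) 1,
        (d : ℝ) * (1 - t) ^ (d - 1) * (1 - t) ^ y = (d : ℝ) * (1 - t) ^ ((d : ℝ) - 1 + y) := by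
      intro t ht
      rw [Set.uIcc_of_le (by norm_num : (0:ℝ) ≤ 1)] at ht
      have h1t : (0:ℝ) ≤ 1 - t := by linarith [ht.2]
      rw [mul_assoc, Real.rpow_add' h1t hp.ne']
      congr 2
      rw [← Real.rpow_natCast (1 - t) (d - 1)]
      congr 1
      have : ((d - 1 : ℕ) : ℝ) = (d : ℝ) - 1 := by
        push_cast [hd]; ring
      linarith [this]
    rw [intervalIntegral.integral_congr heq, intervalIntegral.integral_const_mul]
    have hsub : (∫ t in (0:ℝ)..1, (1 - t) ^ ((d : ℝ) - 1 + y)) =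
        ∫ u in (0:ℝ)..1, u ^ ((d : ℝ) - 1 + y) := by
      have := intervalIntegral.integral_comp_sub_left (a := 0) (b := 1)
        (fun u : ℝ => u ^ ((d : ℝ) - 1 + y)) 1
      simpa using this
    rw [hsub, integral_rpow (Or.inl (by linarith))]
    rw [Real.zero_rpow (by linarith), Real.one_rpow]
    rw [show ((d:ℝ) - 1 + y + 1) = (d:ℝ) + y by ring, sub_zero, mul_one_div]
  rw [← hkey]
  apply intervalIntegral.integral_mono_on (by norm_num) hintf hintg
  intro t ht
  have hnn : (0:ℝ) ≤ (d : ℝ) * (1 - t) ^ (d - 1) := by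
    have : (0:ℝ) ≤ 1 - t := by linarith [ht.2]
    positivity
  exact mul_le_mul_of_nonneg_left (hpt t ht) hnn
end

section
/- Let G ⊂ ℝ^d be a convex set with nonempty interior, and let (y_n) be a sequence in ℝ^d with ‖y_n‖ → ∞. Then there exist points x₁, …, x_d ∈ G and a subsequence (y_{n(k)}) such that the Lebesgue measure of the convex hull conv(x₁, …, x_d, y_{n(k)}) tends to infinity as k → ∞. -/
open MeasureTheory Filter Topology Pointwise

theorem stmt_10 (d : ℕ) (G : Set (EuclideanSpace ℝ (Fin d)))
    (hG : Convex ℝ G) (hGint : (interior G).Nonempty)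
    (y : ℕ → EuclideanSpace ℝ (Fin d))
    (hy : Tendsto (fun n => ‖y n‖) atTop atTop) :
    ∃ x : Fin d → EuclideanSpace ℝ (Fin d), (∀ i, x i ∈ G) ∧
      ∃ φ : ℕ → ℕ, StrictMono φ ∧
        Tendsto (fun k =>
            (volume (convexHull ℝ (insert (y (φ k)) (Set.range x)))).toReal)
          atTop atTop := by
  classical
  rcases Nat.eq_zero_or_pos d with hd | hd
  · exfalso
    subst hd
    obtain ⟨n, hn⟩ := (hy.eventually (eventually_gt_atTop 0)).exists
    have : y n = 0 := Subsingleton.elim _ _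
    rw [this, norm_zero] at hn
    exact lt_irrefl _ hn
  obtain ⟨c, hc⟩ := hGint
  obtain ⟨r, hr, hball⟩ := Metric.isOpen_iff.1 isOpen_interior c hc
  set z : ℕ → EuclideanSpace ℝ (Fin d) := fun n => ‖y n‖⁻¹ • y n with hzdef
  have hzmem : ∀ n, z n ∈ Metric.closedBall (0 : EuclideanSpace ℝ (Fin d)) 1 := by
    intro n
    rcases eq_or_ne (y n) 0 with h | h
    · simp [hzdef, h]
    · have : ‖z n‖ = 1 := by
        simp [hzdef, norm_smul, inv_mul_cancel₀ (norm_ne_zero_iff.2 h)]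
      simp [Metric.mem_closedBall, dist_zero_right, this]
  obtain ⟨u, -, φ, hφ, hconv⟩ :=
    (isCompact_closedBall (0 : EuclideanSpace ℝ (Fin d)) 1).tendsto_subseq hzmem
  have hyy : Tendsto (fun k => ‖y (φ k)‖) atTop atTop := hy.comp hφ.tendsto_atTop
  have hne : ∀ᶠ k in atTop, y (φ k) ≠ 0 := by
    filter_upwards [hyy.eventually (eventually_gt_atTop 0)] with k hk
    exact norm_pos_iff.1 hk
  have hznorm : ∀ᶠ k in atTop, ‖z (φ k)‖ = 1 := by
    filter_upwards [hne] with k hk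
    simp [hzdef, norm_smul, inv_mul_cancel₀ (norm_ne_zero_iff.2 hk)]
  have hnormu : ‖u‖ = 1 := by
    have h1 : Tendsto (fun k => ‖z (φ k)‖) atTop (𝓝 ‖u‖) := hconv.norm
    have h2 : Tendsto (fun k => ‖z (φ k)‖) atTop (𝓝 1) :=
      Tendsto.congr' (hznorm.mono fun k hk => hk.symm) tendsto_const_nhds
    exact tendsto_nhds_unique h1 h2
  have hune : u ≠ 0 := by
    intro h; rw [h, norm_zero] at hnormu; exact one_ne_zero hnormu.symm
  obtain ⟨j, hj⟩ : ∃ j, u j ≠ 0 := by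
    by_contra h
    push_neg at h
    exact hune (by ext i; simpa using h i)
  have hzj : Tendsto (fun k => |z (φ k) j|) atTop (𝓝 |u j|) := by
    have h1 : Tendsto (fun k => z (φ k) j) atTop (𝓝 (u j)) :=
      ((EuclideanSpace.proj j).continuous.tendsto u).comp hconv
    exact h1.abs
  have hyj : Tendsto (fun k => |y (φ k) j|) atTop atTop := by
    have h3 : Tendsto (fun k => ‖y (φ k)‖ * |z (φ k) j|) atTop atTop :=
      Tendsto.atTop_mul_pos (abs_pos.2 hj) hyy hzj
    refine h3.congr' ?_
    filter_upwards [hne] with k hk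
    have hz : z (φ k) j = ‖y (φ k)‖⁻¹ * y (φ k) j := rfl
    rw [hz, abs_mul, abs_inv, abs_norm, ← mul_assoc,
      mul_inv_cancel₀ (norm_ne_zero_iff.2 hk), one_mul]
  -- the geometric construction
  set e : Fin d → EuclideanSpace ℝ (Fin d) := fun i => EuclideanSpace.single i 1 with he
  set x : Fin d → EuclideanSpace ℝ (Fin d) :=
    fun i => if i = j then c else c + (r / 2) • e i with hx
  have hcG : c ∈ G := interior_subset hc
  have hxG : ∀ i, x i ∈ G := by
    intro i
    rcases eq_or_ne i j with rfl | hij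
    · simpa [hx] using hcG
    · have : c + (r / 2) • e i ∈ Metric.ball c r := by
        have : ‖(r / 2) • e i‖ = r / 2 := by
          simp [he, norm_smul, EuclideanSpace.norm_single, abs_of_pos hr]
        simp [Metric.mem_ball, dist_eq_norm, this]
        linarith
      simpa [hx, hij] using interior_subset (hball this)
  set P : Set (EuclideanSpace ℝ (Fin d)) := insert 0 (Set.range e) with hP
  set S : Set (EuclideanSpace ℝ (Fin d)) := convexHull ℝ P with hS
  have hS_compact : IsCompact S :=
    ((Set.finite_singleton 0).union (Set.finite_range e)).isCompact_convexHull ℝ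
  have hv0_lt_top : volume S < ⊤ := hS_compact.measure_lt_top
  set bb : Module.Basis (Fin d) ℝ (EuclideanSpace ℝ (Fin d)) :=
    (EuclideanSpace.basisFun (Fin d) ℝ).toBasis with hbb
  have hbe : ∀ i, bb i = e i := by
    intro i
    rw [hbb, OrthonormalBasis.coe_toBasis, EuclideanSpace.basisFun_apply]
  have hv0_pos : 0 < volume S := by
    apply Measure.measure_pos_of_nonempty_interior volume
    rw [hS, (convex_convexHull ℝ P).interior_nonempty_iff_affineSpan_eq_top,
      affineSpan_convexHull, ← AffineSubspace.coe_eq_univ_iff, hP,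
      affineSpan_insert_zero]
    have hspan : Submodule.span ℝ (Set.range e) = ⊤ := by
      have h := bb.span_eq
      rwa [show Set.range ⇑bb = Set.range e from by
        ext v; constructor
        · rintro ⟨i, rfl⟩; exact ⟨i, (hbe i).symm⟩
        · rintro ⟨i, rfl⟩; exact ⟨i, hbe i⟩] at h
    rw [hspan]; simp
  have key : ∀ w : EuclideanSpace ℝ (Fin d),
      volume (convexHull ℝ (insert w (Set.range x)))
        = ENNReal.ofReal |(w j - c j) * (2 / r * (r / 2) ^ d)| * volume S := by
    intro w
    set g : Fin d → EuclideanSpace ℝ (Fin d) :=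
      fun i => if i = j then w - c else (r / 2) • e i with hg
    set L : EuclideanSpace ℝ (Fin d) →ₗ[ℝ] EuclideanSpace ℝ (Fin d) :=
      bb.constr ℝ g with hL
    have hLe : ∀ i, L (e i) = g i := by
      intro i
      rw [← hbe i, hL]
      exact bb.constr_basis ℝ g i
    have himg : insert w (Set.range x) = (fun v => c + v) '' (L '' P) := by
      rw [Set.image_image, hP, Set.image_insert_eq, ← Set.range_comp]
      have hgj : g j = w - c := by rw [hg]; simp
      have hgne : ∀ i, i ≠ j → g i = (r / 2) • e i := by
        intro i hij; rw [hg]; simp [hij]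
      have hcomp : ((fun v => c + L v) ∘ e) = fun i => c + g i := by
        funext i; simp [Function.comp, hLe]
      ext v
      simp only [Set.mem_insert_iff, Set.mem_range, hcomp, map_zero, add_zero]
      constructor
      · rintro (rfl | ⟨i, rfl⟩)
        · exact Or.inr ⟨j, by rw [hgj]; abel⟩
        · rcases eq_or_ne i j with rfl | hij
          · left; simp [hx]
          · exact Or.inr ⟨i, by rw [hgne i hij, hx]; simp [hij]⟩
      · rintro (rfl | ⟨i, rfl⟩)
        · exact Or.inr ⟨j, by simp [hx]⟩
        · rcases eq_or_ne i j with rfl | hij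
          · left; rw [hgj]; abel
          · exact Or.inr ⟨i, by rw [hgne i hij, hx]; simp [hij]⟩
    have htrans : convexHull ℝ ((fun v => c + v) '' (L '' P))
        = (fun v => c + v) '' (L '' S) := by
      have h1 : (fun v => c + v) '' (L '' P) = ({c} : Set (EuclideanSpace ℝ (Fin d))) + L '' P := by
        rw [Set.singleton_add]
      rw [h1, convexHull_add, convexHull_singleton, hS, ← L.image_convexHull,
        Set.singleton_add]
    have hmeas : volume ((fun v => c + v) '' (L '' S)) = volume (L '' S) := by
      have h2 : (fun v => c + v) '' (L '' S) = (fun v => -c + v) ⁻¹' (L '' S) := by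
        rw [← Set.image_add_left]
      rw [h2, measure_preimage_add]
    have hdet : LinearMap.det L = (w j - c j) * (2 / r * (r / 2) ^ d) := by
      rw [← LinearMap.det_toMatrix bb]
      have hM : LinearMap.toMatrix bb bb L
          = (Matrix.diagonal (fun _ : Fin d => r / 2)).updateCol j
              (fun k => ∑ i, (2 / r * (w i - c i)) •
                (Matrix.diagonal (fun _ : Fin d => r / 2)) k i) := by
        have hgj : g j = w - c := by rw [hg]; simp
        have hgne : ∀ i, i ≠ j → g i = (r / 2) • e i := by
          intro i hij; rw [hg]; simp [hij]
        ext a b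
        rw [LinearMap.toMatrix_apply]
        rcases eq_or_ne b j with rfl | hbj
        · rw [Matrix.updateCol_self, hbe, hLe, hgj]
          have hrepr : bb.repr (w - c) a = w a - c a := by
            rw [hbb, (EuclideanSpace.basisFun (Fin d) ℝ).coe_toBasis_repr_apply]
            rfl
          rw [hrepr, Finset.sum_eq_single a]
          · simp only [Matrix.diagonal_apply_eq, smul_eq_mul]
            field_simp
          · intro i _ hia
            rw [Matrix.diagonal_apply_ne' _ hia]
            simp
          · intro h; exact absurd (Finset.mem_univ a) h
        · rw [Matrix.updateCol_ne hbj, hbe, hLe, hgne b hbj]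
          have hrepr : bb.repr ((r / 2) • e b) a = (r / 2) * (e b) a := by
            rw [hbb, (EuclideanSpace.basisFun (Fin d) ℝ).coe_toBasis_repr_apply]
            rfl
          rw [hrepr]
          rcases eq_or_ne a b with rfl | hab
          · simp [he, EuclideanSpace.single_apply]
          · rw [Matrix.diagonal_apply_ne _ hab]
            simp [he, EuclideanSpace.single_apply, hab]
      rw [hM, Matrix.det_updateCol_sum, Matrix.det_diagonal]
      simp only [smul_eq_mul, Finset.prod_const, Finset.card_univ, Fintype.card_fin]
      ring
    rw [himg, htrans, hmeas, Measure.addHaar_image_linearMap, hdet]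
  refine ⟨x, hxG, φ, hφ, ?_⟩
  have hrpos : (0:ℝ) < 2 / r * (r / 2) ^ d := by positivity
  have hv0r : (0:ℝ) < (volume S).toReal := ENNReal.toReal_pos hv0_pos.ne' hv0_lt_top.ne
  have heval : ∀ k, (volume (convexHull ℝ (insert (y (φ k)) (Set.range x)))).toReal
      = |y (φ k) j - c j| * (2 / r * (r / 2) ^ d * (volume S).toReal) := by
    intro k
    rw [key, ENNReal.toReal_mul, ENNReal.toReal_ofReal (abs_nonneg _), abs_mul,
      abs_of_pos hrpos, mul_assoc]
  rw [show (fun k => (volume (convexHull ℝ (insert (y (φ k)) (Set.range x)))).toReal)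
      = fun k => |y (φ k) j - c j| * (2 / r * (r / 2) ^ d * (volume S).toReal) from
    funext heval]
  apply Tendsto.atTop_mul_const (by positivity : (0:ℝ) < 2 / r * (r / 2) ^ d * (volume S).toReal)
  apply tendsto_atTop_mono (fun k => ?_) (tendsto_atTop_add_const_right _ (-|c j|) hyj)
  have := abs_sub_abs_le_abs_sub (y (φ k) j) (c j)
  linarith
end

section
/- Let g : ℝ^d → [0,∞] be convex with level sets D_u = {g ≤ u}, let ε = inf g be attained at some x₀, and let ε ≤ u ≤ r. Then λ_d(D_u) ≥ ((u-ε)/(r-ε))^d · λ_d(D_r). -/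
open MeasureTheory Pointwise

theorem stmt_12 (d : ℕ) (g : EuclideanSpace ℝ (Fin d) → ℝ)
    (hg0 : ∀ x, 0 ≤ g x) (hgconv : ConvexOn ℝ Set.univ g)
    (x₀ : EuclideanSpace ℝ (Fin d)) (hmin : ∀ x, g x₀ ≤ g x)
    (ε : ℝ) (hε : ε = g x₀)
    (u r : ℝ) (hu : ε ≤ u) (hur : u ≤ r) :
    ENNReal.ofReal (((u - ε) / (r - ε)) ^ d) * volume {x | g x ≤ r} ≤
      volume {x | g x ≤ u} := by
  rcases eq_or_lt_of_le (hu.trans hur) with hre | hre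
  · -- degenerate case: ε = r, hence u = r and the two sets coincide
    have huu : u = r := le_antisymm hur (hre ▸ hu)
    have hle : ENNReal.ofReal (((u - ε) / (r - ε)) ^ d) ≤ 1 := by
      rw [← hre, huu, sub_self, div_zero]
      rcases Nat.eq_zero_or_pos d with rfl | hd
      · simp
      · simp [zero_pow hd.ne']
    calc ENNReal.ofReal (((u - ε) / (r - ε)) ^ d) * volume {x | g x ≤ r}
        ≤ 1 * volume {x | g x ≤ r} := by gcongr
      _ = volume {x | g x ≤ u} := by rw [one_mul, huu]
  · set t : ℝ := (u - ε) / (r - ε) with ht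
    have hrε : (0:ℝ) < r - ε := sub_pos.mpr hre
    have ht0 : 0 ≤ t := div_nonneg (sub_nonneg.mpr hu) hrε.le
    have ht1 : t ≤ 1 := (div_le_one hrε).mpr (by linarith)
    have key : (fun x => (1 - t) • x₀ + t • x) '' {x | g x ≤ r} ⊆ {x | g x ≤ u} := by
      rintro _ ⟨x, hx, rfl⟩
      simp only [Set.mem_setOf_eq] at hx ⊢
      have := hgconv.2 (Set.mem_univ x₀) (Set.mem_univ x)
        (by linarith : (0:ℝ) ≤ 1 - t) ht0 (by ring)
      have heq : (1 - t) * g x₀ + t * r = u := by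
        rw [← hε, ht]
        field_simp
        ring
      calc g ((1 - t) • x₀ + t • x) ≤ (1 - t) * g x₀ + t * g x := this
        _ ≤ (1 - t) * g x₀ + t * r := by nlinarith
        _ = u := heq
    have himg : (fun x => (1 - t) • x₀ + t • x) '' {x | g x ≤ r}
        = ((1 - t) • x₀) +ᵥ ((t • {x | g x ≤ r} : Set (EuclideanSpace ℝ (Fin d)))) := by
      ext y
      simp only [Set.mem_image, Set.mem_vadd_set, Set.mem_smul_set]
      constructor
      · rintro ⟨x, hx, rfl⟩; exact ⟨t • x, ⟨x, hx, rfl⟩, rfl⟩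
      · rintro ⟨_, ⟨x, hx, rfl⟩, rfl⟩; exact ⟨x, hx, rfl⟩
    have hvol : volume ((fun x => (1 - t) • x₀ + t • x) '' {x | g x ≤ r})
        = ENNReal.ofReal (t ^ d) * volume {x | g x ≤ r} := by
      rw [himg, measure_vadd, Measure.addHaar_smul_of_nonneg volume ht0,
        finrank_euclideanSpace_fin]
    calc ENNReal.ofReal (t ^ d) * volume {x | g x ≤ r}
        = volume ((fun x => (1 - t) • x₀ + t • x) '' {x | g x ≤ r}) := hvol.symm
      _ ≤ volume {x | g x ≤ u} := measure_mono key
end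

section
/- Let -1/d < s < 0 and let (f_n) be a sequence of s-concave densities on ℝ^d. If the convex set C = {x ∈ ℝ^d : liminf_n f_n(x) > 0} has dimension d, then sup_n ‖f_n‖_∞ < ∞. -/
open MeasureTheory Filter

lemma rpow_s_inv (s : ℝ) (hs0 : s < 0) {c : ℝ} (hc : 0 < c) : (c ^ s) ^ (1/s) = c := by
  rw [← Real.rpow_mul hc.le, mul_one_div_cancel hs0.ne, Real.rpow_one]

/-- The superlevel set `{z | c ≤ f z}` of an `s`-concave function is convex. -/
lemma superlevel_convex (d : ℕ) (s : ℝ) (hs0 : s < 0)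
    (f : EuclideanSpace ℝ (Fin d) → ℝ)
    (hconc : ∀ x y : EuclideanSpace ℝ (Fin d), ∀ θ : ℝ, θ ∈ Set.Ioo (0:ℝ) 1 →
      0 < f x → 0 < f y →
      ((1 - θ) * f x ^ s + θ * f y ^ s) ^ (1 / s) ≤ f ((1 - θ) • x + θ • y))
    (c : ℝ) (hc : 0 < c) : Convex ℝ {z | c ≤ f z} := by
  intro u hu v hv α β hα hβ hαβ
  simp only [Set.mem_setOf_eq] at hu hv ⊢
  rcases eq_or_lt_of_le hβ with hβ0 | hβ0
  · have : α = 1 := by linarith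
    simp [this, ← hβ0, hu]
  rcases eq_or_lt_of_le hα with hα0 | hα0
  · have : β = 1 := by linarith
    simp [this, ← hα0, hv]
  have hβ1 : β < 1 := by linarith
  have hα' : α = 1 - β := by linarith
  have hu0 : 0 < f u := lt_of_lt_of_le hc hu
  have hv0 : 0 < f v := lt_of_lt_of_le hc hv
  have h := hconc u v β ⟨hβ0, hβ1⟩ hu0 hv0
  rw [hα']
  refine le_trans ?_ h
  have hus : f u ^ s ≤ c ^ s := Real.rpow_le_rpow_of_nonpos hc hu hs0.le
  have hvs : f v ^ s ≤ c ^ s := Real.rpow_le_rpow_of_nonpos hc hv hs0.le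
  have hcs : 0 < c ^ s := Real.rpow_pos_of_pos hc s
  have hcomb : 0 < (1 - β) * f u ^ s + β * f v ^ s := by
    have := Real.rpow_pos_of_pos hu0 s
    have := Real.rpow_pos_of_pos hv0 s
    nlinarith
  have hcomb' : (1 - β) * f u ^ s + β * f v ^ s ≤ c ^ s := by nlinarith
  have hinv : (1:ℝ)/s ≤ 0 := le_of_lt (div_neg_of_pos_of_neg one_pos hs0)
  have := Real.rpow_le_rpow_of_nonpos hcomb hcomb' hinv
  calc c = (c ^ s) ^ (1/s) := (rpow_s_inv s hs0 hc).symm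
    _ ≤ _ := this

set_option maxHeartbeats 2000000 in
lemma key_bound (d : ℕ) (hd : 0 < d) (s : ℝ) (hs1 : -1 / (d : ℝ) < s) (hs0 : s < 0)
    (t : Set (EuclideanSpace ℝ (Fin d))) (ht : t.Finite) (hspan : affineSpan ℝ t = ⊤)
    (c : ℝ) (hc : 0 < c) :
    ∃ M : ℝ, ∀ f : EuclideanSpace ℝ (Fin d) → ℝ,
      (∀ x, 0 ≤ f x) → (∫ x, f x = 1) →
      (∀ x y : EuclideanSpace ℝ (Fin d), ∀ θ : ℝ, θ ∈ Set.Ioo (0:ℝ) 1 →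
        0 < f x → 0 < f y →
        ((1 - θ) * f x ^ s + θ * f y ^ s) ^ (1 / s) ≤ f ((1 - θ) • x + θ • y)) →
      (∀ z ∈ t, c ≤ f z) → ∀ x, f x ≤ M := by
  classical
  set S : Set (EuclideanSpace ℝ (Fin d)) := convexHull ℝ t with hS
  have hSconv : Convex ℝ S := convex_convexHull ℝ t
  have hScpt : IsCompact S := ht.isCompact_convexHull ℝ
  have hSspan : affineSpan ℝ S = ⊤ := by rw [hS, affineSpan_convexHull, hspan]
  have hSint : (interior S).Nonempty :=
    hSconv.interior_nonempty_iff_affineSpan_eq_top.2 hSspan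
  have hSpos : 0 < volume S := Measure.measure_pos_of_nonempty_interior _ hSint
  have hSfin : volume S < ⊤ := hScpt.measure_lt_top
  set v : ℝ := (volume S).toReal with hv
  have hvpos : 0 < v := ENNReal.toReal_pos hSpos.ne' hSfin.ne
  have hde : (0:ℝ) < (d:ℝ) := by exact_mod_cast hd
  have he : 0 < 1 + s * d := by
    have : -1 < s * d := by
      have := (div_lt_iff₀ hde).1 (by linarith [hs1] : -1 / (d:ℝ) < s)
      linarith [mul_comm s (d:ℝ) ▸ this]
    linarith
  set b : ℝ := c ^ s with hb
  have hbpos : 0 < b := Real.rpow_pos_of_pos hc s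
  have h2pos : (0:ℝ) < (2:ℝ) ^ (1/s) := Real.rpow_pos_of_pos two_pos _
  set K : ℝ := b ^ d / ((2:ℝ) ^ (1/s) * v) with hK
  refine ⟨max c (K ^ (1 / (1 + s * d))), ?_⟩
  intro f hf0 hfint hconc hct x
  -- f is integrable
  have hint : Integrable f := by
    by_contra h
    rw [integral_undef h] at hfint
    norm_num at hfint
  -- f ≥ c on S
  have hfS : ∀ y ∈ S, c ≤ f y := by
    intro y hy
    have : S ⊆ {z | c ≤ f z} := convexHull_min hct (superlevel_convex d s hs0 f hconc c hc)
    exact this hy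
  by_cases hxc : f x ≤ c
  · exact le_trans hxc (le_max_left _ _)
  push_neg at hxc
  refine le_trans ?_ (le_max_right _ _)
  set M₀ : ℝ := f x with hM₀
  have hM₀pos : 0 < M₀ := lt_trans hc hxc
  set a : ℝ := M₀ ^ s with ha
  have hapos : 0 < a := Real.rpow_pos_of_pos hM₀pos s
  have hab : a < b := Real.rpow_lt_rpow_of_neg hc hxc hs0
  set θ : ℝ := a / b with hθ
  have hθ0 : 0 < θ := div_pos hapos hbpos
  have hθ1 : θ < 1 := (div_lt_one hbpos).2 hab
  set B : Set (EuclideanSpace ℝ (Fin d)) := AffineMap.homothety x θ '' S with hB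
  have hBcpt : IsCompact B := hScpt.image (AffineMap.homothety x θ).continuous_of_finiteDimensional
  -- f ≥ 2^(1/s) * M₀ on B
  have hfB : ∀ z ∈ B, (2:ℝ) ^ (1/s) * M₀ ≤ f z := by
    rintro z ⟨y, hy, rfl⟩
    have hyc : c ≤ f y := hfS y hy
    have hy0 : 0 < f y := lt_of_lt_of_le hc hyc
    have hzeq : AffineMap.homothety x θ y = (1 - θ) • x + θ • y := by
      simp [AffineMap.homothety_apply, vsub_eq_sub, vadd_eq_add, sub_smul, smul_sub, one_smul]
      module
    rw [hzeq]
    have h := hconc x y θ ⟨hθ0, hθ1⟩ hM₀pos hy0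
    refine le_trans ?_ h
    have hys : f y ^ s ≤ b := Real.rpow_le_rpow_of_nonpos hc hyc hs0.le
    have hcomb : 0 < (1 - θ) * f x ^ s + θ * f y ^ s := by
      have := Real.rpow_pos_of_pos hy0 s
      nlinarith
    have hcomb' : (1 - θ) * f x ^ s + θ * f y ^ s ≤ 2 * a := by
      have hθb : θ * b = a := div_mul_cancel₀ a hbpos.ne'
      have : θ * f y ^ s ≤ θ * b := by nlinarith
      nlinarith
    have hinv : (1:ℝ)/s ≤ 0 := le_of_lt (div_neg_of_pos_of_neg one_pos hs0)
    have h2 := Real.rpow_le_rpow_of_nonpos hcomb hcomb' hinv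
    have : ((2:ℝ) * a) ^ (1/s) = (2:ℝ) ^ (1/s) * M₀ := by
      rw [Real.mul_rpow (by norm_num) hapos.le, ha, rpow_s_inv s hs0 hM₀pos]
    rw [← this]
    exact h2
  -- measure of B
  have hBvol : (volume B).toReal = θ ^ d * v := by
    rw [hB, Measure.addHaar_image_homothety, abs_of_nonneg (by positivity),
      finrank_euclideanSpace_fin, ENNReal.toReal_mul, ENNReal.toReal_ofReal (by positivity)]
  -- integral estimate
  have hchain : (2:ℝ) ^ (1/s) * M₀ * (θ ^ d * v) ≤ 1 := by
    have h1 : (2:ℝ) ^ (1/s) * M₀ * (volume B).toReal ≤ ∫ z in B, f z :=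
      setIntegral_ge_of_const_le_real hBcpt.measurableSet hBcpt.measure_lt_top.ne hfB
        hint.integrableOn
    have h2 : ∫ z in B, f z ≤ ∫ z, f z :=
      setIntegral_le_integral hint (Eventually.of_forall hf0)
    rw [hBvol] at h1
    rw [hfint] at h2
    linarith
  -- algebra
  have hθd : θ ^ d = M₀ ^ (s * d) / b ^ d := by
    rw [hθ, div_pow, ha, ← Real.rpow_natCast (M₀ ^ s) d, ← Real.rpow_mul hM₀pos.le]
  have hMe : M₀ ^ (1 + s * (d:ℝ)) = M₀ * M₀ ^ (s * (d:ℝ)) := by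
    rw [Real.rpow_add hM₀pos, Real.rpow_one]
  have hbd : (0:ℝ) < b ^ d := by positivity
  have hkey : M₀ ^ (1 + s * (d:ℝ)) ≤ K := by
    rw [hK, le_div_iff₀ (by positivity)]
    calc M₀ ^ (1 + s * (d:ℝ)) * ((2:ℝ) ^ (1/s) * v)
        = ((2:ℝ) ^ (1/s) * M₀ * (θ ^ d * v)) * b ^ d := by
          rw [hθd, hMe]; field_simp
      _ ≤ 1 * b ^ d := by nlinarith
      _ = b ^ d := one_mul _
  calc M₀ = (M₀ ^ (1 + s * (d:ℝ))) ^ (1 / (1 + s * (d:ℝ))) := by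
        rw [← Real.rpow_mul hM₀pos.le, mul_one_div_cancel he.ne', Real.rpow_one]
    _ ≤ K ^ (1 / (1 + s * (d:ℝ))) :=
        Real.rpow_le_rpow (Real.rpow_pos_of_pos hM₀pos _).le hkey (by positivity)

lemma bounded_one (d : ℕ) (hd : 0 < d) (s : ℝ) (hs1 : -1 / (d : ℝ) < s) (hs0 : s < 0)
    (f : EuclideanSpace ℝ (Fin d) → ℝ) (hf0 : ∀ x, 0 ≤ f x) (hfint : ∫ x, f x = 1)
    (hconc : ∀ x y : EuclideanSpace ℝ (Fin d), ∀ θ : ℝ, θ ∈ Set.Ioo (0:ℝ) 1 →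
      0 < f x → 0 < f y →
      ((1 - θ) * f x ^ s + θ * f y ^ s) ^ (1 / s) ≤ f ((1 - θ) • x + θ • y)) :
    ∃ M : ℝ, ∀ x, f x ≤ M := by
  classical
  have hpos : volume {x | 0 < f x} ≠ 0 := by
    intro h0
    have hsub : {x | ¬ f x = 0} ⊆ {x | 0 < f x} := fun x hx =>
      lt_of_le_of_ne (hf0 x) (Ne.symm hx)
    have hae : f =ᵐ[volume] 0 := by
      rw [Filter.EventuallyEq, ae_iff]
      exact measure_mono_null hsub h0
    rw [integral_congr_ae hae] at hfint
    simp at hfint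
  have hspan : affineSpan ℝ {x | 0 < f x} = ⊤ := by
    by_contra h
    exact hpos (measure_mono_null (subset_affineSpan ℝ _)
      (Measure.addHaar_affineSubspace volume _ h))
  obtain ⟨t, hts, htspan, hti⟩ :=
    exists_affineIndependent ℝ (EuclideanSpace ℝ (Fin d)) {x | 0 < f x}
  rw [hspan] at htspan
  have htfin : t.Finite := finite_set_of_fin_dim_affineIndependent ℝ hti
  have htne : t.Nonempty := by
    rcases t.eq_empty_or_nonempty with rfl | h
    · rw [AffineSubspace.span_empty] at htspan
      exact absurd htspan (AffineSubspace.bot_ne_top ℝ (EuclideanSpace ℝ (Fin d)) _)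
    · exact h
  have hTne : htfin.toFinset.Nonempty := by
    rwa [Set.Finite.toFinset_nonempty]
  set c := htfin.toFinset.inf' hTne f with hcdef
  have hc : 0 < c := by
    rw [hcdef, Finset.lt_inf'_iff]
    intro z hz
    exact hts (htfin.mem_toFinset.1 hz)
  obtain ⟨M, hM⟩ := key_bound d hd s hs1 hs0 t htfin htspan c hc
  exact ⟨M, hM f hf0 hfint hconc fun z hz => Finset.inf'_le f (htfin.mem_toFinset.2 hz)⟩

theorem stmt_13 (d : ℕ) (hd : 0 < d) (s : ℝ) (hs1 : -1 / (d : ℝ) < s) (hs0 : s < 0)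
    (f : ℕ → EuclideanSpace ℝ (Fin d) → ℝ)
    (hf0 : ∀ n x, 0 ≤ f n x)
    (hfdens : ∀ n, ∫ x, f n x = 1)
    (hconc : ∀ n, ∀ x y : EuclideanSpace ℝ (Fin d), ∀ θ : ℝ, θ ∈ Set.Ioo (0:ℝ) 1 →
      0 < f n x → 0 < f n y →
      ((1 - θ) * f n x ^ s + θ * f n y ^ s) ^ (1 / s) ≤ f n ((1 - θ) • x + θ • y))
    (hdim : ∃ p : Fin (d + 1) → EuclideanSpace ℝ (Fin d), AffineIndependent ℝ p ∧
      ∀ i, 0 < liminf (fun n => f n (p i)) atTop) :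
    ∃ M : ℝ, ∀ n x, f n x ≤ M := by
  classical
  obtain ⟨p, hp, hlim⟩ := hdim
  have hspanp : affineSpan ℝ (Set.range p) = ⊤ := by
    rw [hp.affineSpan_eq_top_iff_card_eq_finrank_add_one]
    simp [finrank_euclideanSpace_fin]
  set L : Fin (d+1) → ℝ := fun i => liminf (fun n => f n (p i)) atTop with hL
  have hne : (Finset.univ : Finset (Fin (d+1))).Nonempty := Finset.univ_nonempty
  set c : ℝ := (Finset.univ.inf' hne L) / 2 with hcdef
  have hinf : 0 < Finset.univ.inf' hne L := by
    rw [Finset.lt_inf'_iff]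
    intro i _
    exact hlim i
  have hc : 0 < c := by rw [hcdef]; positivity
  have hev : ∀ᶠ n in atTop, ∀ i, c ≤ f n (p i) := by
    rw [eventually_all]
    intro i
    have hcob : IsBoundedUnder (· ≥ ·) atTop (fun n => f n (p i)) :=
      isBoundedUnder_of ⟨0, fun n => hf0 n (p i)⟩
    have hlt : c < L i :=
      lt_of_lt_of_le (by rw [hcdef]; linarith) (Finset.inf'_le L (Finset.mem_univ i))
    exact (eventually_lt_of_lt_liminf hlt hcob).mono fun n h => h.le
  obtain ⟨N, hN⟩ := eventually_atTop.1 hev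
  obtain ⟨M₁, hM₁⟩ := key_bound d hd s hs1 hs0 (Set.range p) (Set.finite_range p) hspanp c hc
  choose g hg using fun n => bounded_one d hd s hs1 hs0 (f n) (hf0 n) (hfdens n) (hconc n)
  refine ⟨max M₁ (((Finset.range N).sup fun n => ⌈g n⌉₊ : ℕ) : ℝ), ?_⟩
  intro n x
  rcases le_or_gt N n with h | h
  · exact le_trans (hM₁ (f n) (hf0 n) (hfdens n) (hconc n)
      (fun z hz => by obtain ⟨i, rfl⟩ := hz; exact hN n h i) x) (le_max_left _ _)
  · refine le_trans (hg n x) (le_trans ?_ (le_max_right _ _))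
    calc g n ≤ (⌈g n⌉₊ : ℝ) := Nat.le_ceil _
      _ ≤ _ := by
        exact_mod_cast Nat.cast_le.2 (Finset.le_sup (f := fun n => ⌈g n⌉₊)
          (Finset.mem_range.2 h))
end

section
/- Let ν be a probability measure on ℝ^d with s-concave density f = g^{-r}, where r = -1/s > d, g convex. Let x₀, …, x_d span a nondegenerate simplex Δ, and set ḡ = (1/d)∑_{i=1}^d g(x_i). If g(x₀) ≥ ḡ, then f(x₀) ≤ ḡ^{-r} ( 1 - d/r + (d/r)·λ_d(Δ)·ḡ^{-r}/ν(Δ) )^{-r}. -/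
open MeasureTheory Set

lemma convexOn_rpow_neg {r : ℝ} (hr : 0 ≤ r) :
    ConvexOn ℝ (Set.Ioi (0:ℝ)) (fun t => t ^ (-r)) := by
  have h1 : ContinuousOn (fun t : ℝ => t ^ (-r)) (Set.Ioi 0) := by
    intro x hx
    exact (Real.continuousAt_rpow_const x (-r) (Or.inl (ne_of_gt hx))).continuousWithinAt
  refine convexOn_of_deriv2_nonneg (convex_Ioi 0) h1 ?_ ?_ ?_
  · rw [interior_Ioi]
    intro x hx
    exact (Real.hasDerivAt_rpow_const (p := -r) (Or.inl (ne_of_gt hx))).differentiableAt.differentiableWithinAt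
  · rw [interior_Ioi]
    intro x hx
    have hderiv : Set.EqOn (deriv fun t : ℝ => t ^ (-r)) (fun t : ℝ => -r * t ^ (-r - 1)) (Set.Ioi 0) := by
      intro y hy
      exact (Real.hasDerivAt_rpow_const (p := -r) (Or.inl (ne_of_gt hy))).deriv
    have : DifferentiableAt ℝ (fun t : ℝ => -r * t ^ (-r - 1)) x :=
      ((Real.hasDerivAt_rpow_const (p := -r - 1) (Or.inl (ne_of_gt hx))).differentiableAt).const_mul _
    exact (((Filter.eventuallyEq_of_mem (Ioi_mem_nhds hx) hderiv).differentiableAt_iff).mpr this).differentiableWithinAt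
  · rw [interior_Ioi]
    intro x hx
    have hderiv : Set.EqOn (deriv fun t : ℝ => t ^ (-r)) (fun t : ℝ => -r * t ^ (-r - 1)) (Set.Ioi 0) := by
      intro y hy
      exact (Real.hasDerivAt_rpow_const (p := -r) (Or.inl (ne_of_gt hy))).deriv
    have h2 : deriv (deriv fun t : ℝ => t ^ (-r)) x = deriv (fun t : ℝ => -r * t ^ (-r - 1)) x := by
      apply Filter.EventuallyEq.deriv_eq
      exact Filter.eventuallyEq_of_mem (Ioi_mem_nhds hx) hderiv
    rw [show deriv^[2] (fun t : ℝ => t ^ (-r)) x = deriv (deriv fun t : ℝ => t ^ (-r)) x from rfl, h2]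
    have h3 : deriv (fun t : ℝ => -r * t ^ (-r - 1)) x = -r * ((-r - 1) * x ^ (-r - 1 - 1)) := by
      rw [deriv_const_mul _ (Real.hasDerivAt_rpow_const (p := -r - 1) (Or.inl (ne_of_gt hx))).differentiableAt,
        (Real.hasDerivAt_rpow_const (p := -r - 1) (Or.inl (ne_of_gt hx))).deriv]
    rw [h3]
    have : (0:ℝ) ≤ x ^ (-r - 1 - 1) := Real.rpow_nonneg (le_of_lt hx) _
    have h4 := mul_nonneg (mul_nonneg hr (by linarith : (0:ℝ) ≤ r + 1)) this
    nlinarith [h4]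
open MeasureTheory Set intervalIntegral

lemma oneD (d : ℕ) (hd : 0 < d) (r a b : ℝ) (hrd : (d:ℝ) < r) (hb : 0 < b) (hab : b ≤ a) :
    ((d:ℝ)/r) * b ^ (1-r) ≤
      (∫ t in (0:ℝ)..1, (d:ℝ) * t ^ (d-1) * ((1-t)*a + t*b) ^ (-r)) * (a - (1 - (d:ℝ)/r)*b) := by
  have hr0 : (0:ℝ) < r := lt_of_le_of_lt (Nat.cast_nonneg d) hrd
  have hd1 : (1:ℝ) ≤ (d:ℝ) := by exact_mod_cast hd
  set L : ℝ → ℝ := fun t => (1-t)*a + t*b with hL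
  have hLpos : ∀ t ∈ Set.Icc (0:ℝ) 1, 0 < L t := by
    intro t ht
    have : L t = a + t * (b - a) := by simp [hL]; ring
    nlinarith [ht.1, ht.2]
  have hLcont : Continuous L := by fun_prop
  -- continuity of integrands
  have hcont1 : ContinuousOn (fun t : ℝ => (d:ℝ) * t ^ (d-1) * L t ^ (-r)) (Set.Icc 0 1) := by
    apply ContinuousOn.mul (by fun_prop)
    exact ContinuousOn.rpow_const hLcont.continuousOn
      (fun t ht => Or.inl (ne_of_gt (hLpos t ht)))
  have hcont2 : ContinuousOn (fun t : ℝ => t ^ d * L t ^ (-r-1)) (Set.Icc 0 1) := by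
    apply ContinuousOn.mul (by fun_prop)
    exact ContinuousOn.rpow_const hLcont.continuousOn
      (fun t ht => Or.inl (ne_of_gt (hLpos t ht)))
  set J : ℝ := ∫ t in (0:ℝ)..1, (d:ℝ) * t ^ (d-1) * L t ^ (-r) with hJ
  set K : ℝ := ∫ t in (0:ℝ)..1, t ^ d * L t ^ (-r-1) with hK
  have hint1 : IntervalIntegrable (fun t : ℝ => (d:ℝ) * t ^ (d-1) * L t ^ (-r)) volume 0 1 :=
    (hcont1.mono (by rw [Set.uIcc_of_le] <;> norm_num)).intervalIntegrable
  have hint2 : IntervalIntegrable (fun t : ℝ => t ^ d * L t ^ (-r-1)) volume 0 1 :=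
    (hcont2.mono (by rw [Set.uIcc_of_le] <;> norm_num)).intervalIntegrable
  -- FTC identity
  have hFTC : J + r*(a-b)*K = b ^ (-r) := by
    have hderiv : ∀ t ∈ Set.uIcc (0:ℝ) 1,
        HasDerivAt (fun t => t ^ d * L t ^ (-r))
          ((d:ℝ) * t ^ (d-1) * L t ^ (-r) + r*(a-b) * (t ^ d * L t ^ (-r-1))) t := by
      intro t ht
      rw [Set.uIcc_of_le (by norm_num)] at ht
      have h1 : HasDerivAt (fun t : ℝ => t ^ d) ((d:ℝ) * t ^ (d-1)) t := by
        simpa using hasDerivAt_pow d t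
      have hL' : HasDerivAt L (-a + b) t := by
        have : HasDerivAt (fun t : ℝ => (1-t)*a + t*b) ((-1)*a + 1*b) t := by
          exact (((hasDerivAt_id t).const_sub 1).mul_const a).add ((hasDerivAt_id t).mul_const b)
        simpa using this
      have h2 : HasDerivAt (fun t => L t ^ (-r)) ((-a + b) * (-r) * L t ^ (-r-1)) t :=
        HasDerivAt.rpow_const hL' (Or.inl (ne_of_gt (hLpos t ht)))
      have := h1.mul h2
      refine this.congr_deriv ?_
      ring
    have := intervalIntegral.integral_eq_sub_of_hasDerivAt hderiv
      (hint1.add (hint2.const_mul (r*(a-b))))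
    rw [intervalIntegral.integral_add hint1 (hint2.const_mul (r*(a-b)))] at this
    rw [intervalIntegral.integral_const_mul] at this
    rw [hJ, hK]
    rw [this]
    have h0 : (0:ℝ) ^ d = 0 := zero_pow hd.ne'
    simp [hL, h0]
  -- J ≥ d * b * K
  have hJK : (d:ℝ) * b * K ≤ J := by
    rw [hJ, hK, ← intervalIntegral.integral_const_mul]
    apply intervalIntegral.integral_mono_on (by norm_num) (hint2.const_mul _) hint1
    intro t ht
    have hLt := hLpos t ht
    have h1 : L t ^ (-r-1) = L t ^ (-r) * (L t)⁻¹ := by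
      rw [show -r-1 = -r + (-1) by ring, Real.rpow_add hLt, Real.rpow_neg_one]
    rw [h1]
    have htb : t * b ≤ L t := by
      have : L t = a + t * (b - a) := by simp [hL]; ring
      nlinarith [ht.1, ht.2]
    have hLrpos : (0:ℝ) ≤ L t ^ (-r) := Real.rpow_nonneg hLt.le _
    have htd : t ^ d = t ^ (d-1) * t := by
      conv_lhs => rw [← Nat.sub_add_cancel hd]
      rw [pow_succ]
    rw [htd]
    have key : t * b * (L t)⁻¹ ≤ 1 := by
      rw [mul_inv_le_iff₀ hLt]
      linarith
    have htpow : (0:ℝ) ≤ t ^ (d-1) := pow_nonneg ht.1 _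
    calc (d:ℝ) * b * (t ^ (d-1) * t * (L t ^ (-r) * (L t)⁻¹))
        = (d:ℝ) * t ^ (d-1) * L t ^ (-r) * (t * b * (L t)⁻¹) := by ring
      _ ≤ (d:ℝ) * t ^ (d-1) * L t ^ (-r) * 1 := by
          apply mul_le_mul_of_nonneg_left key
          positivity
      _ = (d:ℝ) * t ^ (d-1) * L t ^ (-r) := by ring
  have hK0 : 0 ≤ K := by
    rw [hK]
    apply intervalIntegral.integral_nonneg (by norm_num)
    intro t ht
    exact mul_nonneg (pow_nonneg ht.1 _) (Real.rpow_nonneg (hLpos t ht).le _)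
  -- algebra
  have hb1r : b ^ (1-r) = b * b ^ (-r) := by
    rw [show (1:ℝ)-r = 1 + -r by ring, Real.rpow_add hb, Real.rpow_one]
  rw [hb1r, ← hFTC]
  have hrne : r ≠ 0 := ne_of_gt hr0
  have expand : J * (a - (1 - (d:ℝ)/r)*b) - (d:ℝ)/r * (b * (J + r*(a-b)*K))
      = (a-b)*J - (d:ℝ)*b*(a-b)*K := by
    field_simp
    ring
  nlinarith [mul_le_mul_of_nonneg_left hJK (by linarith [hab] : (0:ℝ) ≤ a - b), expand]
open MeasureTheory Set Pointwise

variable {d : ℕ}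

def sSet (d : ℕ) : Set (EuclideanSpace ℝ (Fin d)) :=
  {l | (∀ i, 0 ≤ l i) ∧ ∑ i, l i ≤ 1}

lemma sSet_isCompact (d : ℕ) : IsCompact (sSet d) := by
  have hcl : IsClosed (sSet d) := by
    have h1 : IsClosed {l : EuclideanSpace ℝ (Fin d) | ∀ i, 0 ≤ l i} := by
      have : {l : EuclideanSpace ℝ (Fin d) | ∀ i, 0 ≤ l i} = ⋂ i, {l | 0 ≤ l i} := by
        ext l; simp
      rw [this]
      exact isClosed_iInter fun i => isClosed_le continuous_const (by fun_prop)
    have h2 : IsClosed {l : EuclideanSpace ℝ (Fin d) | ∑ i, l i ≤ 1} :=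
      isClosed_le (by fun_prop) continuous_const
    exact h1.inter h2
  have hbd : Bornology.IsBounded (sSet d) := by
    rw [Metric.isBounded_iff_subset_closedBall 0]
    refine ⟨Real.sqrt d, fun l hl => ?_⟩
    simp only [Metric.mem_closedBall, dist_zero_right]
    rw [EuclideanSpace.norm_eq]
    apply Real.sqrt_le_sqrt
    have hle1 : ∀ i, l i ≤ 1 := by
      intro i
      calc l i ≤ ∑ j, l j := Finset.single_le_sum (fun j _ => hl.1 j) (Finset.mem_univ i)
        _ ≤ 1 := hl.2
    calc ∑ i, ‖l i‖ ^ 2 ≤ ∑ _i : Fin d, (1:ℝ) := by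
          apply Finset.sum_le_sum
          intro i _
          rw [Real.norm_eq_abs, abs_of_nonneg (hl.1 i), sq]
          exact mul_le_one₀ (hle1 i) (hl.1 i) (hle1 i)
      _ = d := by simp
  exact Metric.isCompact_of_isClosed_isBounded hcl hbd

lemma sSet_meas (d : ℕ) : MeasurableSet (sSet d) :=
  (sSet_isCompact d).isClosed.measurableSet

lemma sSet_vol_ne_top (d : ℕ) : volume (sSet d) ≠ ⊤ :=
  (sSet_isCompact d).measure_lt_top.ne

lemma sSet_smul {c : ℝ} (hc0 : 0 ≤ c) (hc1 : c ≤ 1) :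
    sSet d ∩ {l : EuclideanSpace ℝ (Fin d) | ∑ i, l i ≤ c} = c • sSet d := by
  rcases eq_or_lt_of_le hc0 with h0 | hpos
  · ext l
    constructor
    · rintro ⟨⟨hnn, _⟩, hsc⟩
      have hl0 : l = 0 := by
        ext i
        have h1 : l i ≤ ∑ j, l j := Finset.single_le_sum (fun j _ => hnn j) (Finset.mem_univ i)
        have h2 : (0:ℝ) ≤ ∑ j, l j := Finset.sum_nonneg fun j _ => hnn j
        have : ∑ j, l j ≤ 0 := by rw [← h0] at hsc; exact hsc
        have := le_antisymm this h2
        have := h1.trans this.le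
        exact le_antisymm this (hnn i)
      rw [hl0, ← h0]
      exact ⟨0, ⟨fun i => le_refl 0, by simp⟩, by simp⟩
    · rintro ⟨m, hm, rfl⟩
      rw [← h0]
      constructor
      · constructor
        · intro i; simp
        · simp
      · simp
  · ext l
    rw [Set.mem_smul_set_iff_inv_smul_mem₀ (ne_of_gt hpos)]
    constructor
    · rintro ⟨⟨hnn, _⟩, hsc⟩
      constructor
      · intro i
        have : (c⁻¹ • l) i = c⁻¹ * l i := rfl
        rw [this]
        exact mul_nonneg (inv_nonneg.mpr hc0) (hnn i)
      · have hsum : ∑ i, (c⁻¹ • l) i = c⁻¹ * ∑ i, l i := by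
          rw [Finset.mul_sum]; rfl
        rw [hsum]
        rw [inv_mul_le_iff₀ hpos, mul_one]
        exact hsc
    · rintro ⟨hnn, hsum⟩
      have hsum' : ∑ i, (c⁻¹ • l) i = c⁻¹ * ∑ i, l i := by
        rw [Finset.mul_sum]; rfl
      rw [hsum'] at hsum
      rw [inv_mul_le_iff₀ hpos, mul_one] at hsum
      have hnn' : ∀ i, 0 ≤ l i := by
        intro i
        have h1 := hnn i
        have : (c⁻¹ • l) i = c⁻¹ * l i := rfl
        rw [this] at h1
        have h2 : 0 < c⁻¹ := inv_pos.mpr hpos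
        nlinarith [h1, h2]
      exact ⟨⟨hnn', hsum.trans hc1⟩, hsum⟩

lemma sSet_smul_vol {c : ℝ} (hd : 0 < d) (hc0 : 0 ≤ c) (hc1 : c ≤ 1) :
    volume (sSet d ∩ {l : EuclideanSpace ℝ (Fin d) | ∑ i, l i ≤ c}) =
      ENNReal.ofReal (c ^ d) * volume (sSet d) := by
  rw [sSet_smul hc0 hc1, Measure.addHaar_smul_of_nonneg volume hc0, finrank_euclideanSpace_fin]

lemma sSet_slice (d : ℕ) (hd : 0 < d) (h : ℝ → ℝ) (hh : Continuous h) :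
    ∫ l in sSet d, h (∑ i, l i) =
      ∫ t in (0:ℝ)..1, (volume (sSet d)).toReal * ((d:ℝ) * t ^ (d-1)) * h t := by
  set vs : ℝ := (volume (sSet d)).toReal with hvs
  have hvs0 : 0 ≤ vs := ENNReal.toReal_nonneg
  have hσ : Continuous (fun l : EuclideanSpace ℝ (Fin d) => ∑ i, l i) := by fun_prop
  set μ := Measure.map (fun l : EuclideanSpace ℝ (Fin d) => ∑ i, l i)
    (volume.restrict (sSet d)) with hμ
  set dens : ℝ → NNReal := fun t => (vs * ((d:ℝ) * t ^ (d-1))).toNNReal with hdens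
  set ρ := (volume.restrict (Ioc (0:ℝ) 1)).withDensity (fun t => (dens t : ENNReal)) with hρ
  have hdens_meas : Measurable dens :=
    (continuous_const.mul ((continuous_const.mul (continuous_pow (d-1))))).measurable.real_toNNReal
  set φ : ℝ → ENNReal := fun c => if c < 0 then 0 else
    ENNReal.ofReal (min c 1 ^ d) * volume (sSet d) with hφ
  have hμIic : ∀ c : ℝ, μ (Iic c) = φ c := by
    intro c
    rw [hμ, Measure.map_apply hσ.measurable measurableSet_Iic,
      Measure.restrict_apply (hσ.measurable measurableSet_Iic)]
    by_cases hc : c < 0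
    · have hempty : (fun l : EuclideanSpace ℝ (Fin d) => ∑ i, l i) ⁻¹' Iic c ∩ sSet d = ∅ := by
        ext l
        simp only [Set.mem_inter_iff, Set.mem_preimage, Set.mem_Iic, Set.mem_empty_iff_false,
          iff_false, not_and]
        intro hsc hS
        have : (0:ℝ) ≤ ∑ i, l i := Finset.sum_nonneg fun i _ => hS.1 i
        linarith
      rw [hempty, measure_empty, hφ]
      simp [hc]
    · push_neg at hc
      have hset : (fun l : EuclideanSpace ℝ (Fin d) => ∑ i, l i) ⁻¹' Iic c ∩ sSet d =
          sSet d ∩ {l : EuclideanSpace ℝ (Fin d) | ∑ i, l i ≤ min c 1} := by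
        ext l
        simp only [Set.mem_inter_iff, Set.mem_preimage, Set.mem_Iic, Set.mem_setOf_eq,
          le_min_iff, sSet]
        constructor
        · rintro ⟨h1, h2, h3⟩; exact ⟨⟨h2, h3⟩, h1, h3⟩
        · rintro ⟨⟨h2, h3⟩, h1, _⟩; exact ⟨h1, h2, h3⟩
      rw [hset, sSet_smul_vol hd (le_min hc zero_le_one) (min_le_right c 1), hφ]
      simp [not_lt.mpr hc]
  have hρIic : ∀ c : ℝ, ρ (Iic c) = φ c := by
    intro c
    rw [hρ, withDensity_apply _ measurableSet_Iic, Measure.restrict_restrict measurableSet_Iic]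
    have hset : Iic c ∩ Ioc (0:ℝ) 1 = Ioc 0 (min c 1) := by
      ext t
      simp only [Set.mem_inter_iff, Set.mem_Iic, Set.mem_Ioc, le_min_iff]
      tauto
    rw [hset]
    by_cases hc : c < 0
    · have : Ioc (0:ℝ) (min c 1) = ∅ := by
        apply Set.Ioc_eq_empty
        intro hlt
        have := min_le_left c 1
        linarith
      rw [this, hφ]
      simp [hc]
    · push_neg at hc
      set m : ℝ := min c 1 with hm
      have hm0 : 0 ≤ m := le_min hc zero_le_one
      have hcontf : Continuous (fun t : ℝ => vs * ((d:ℝ) * t ^ (d-1))) :=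
        continuous_const.mul (continuous_const.mul (continuous_pow (d-1)))
      have hint : IntegrableOn (fun t : ℝ => vs * ((d:ℝ) * t ^ (d-1))) (Ioc 0 m) volume :=
        hcontf.integrableOn_Ioc
      have hnn : 0 ≤ᵐ[volume.restrict (Ioc (0:ℝ) m)] fun t : ℝ => vs * ((d:ℝ) * t ^ (d-1)) := by
        rw [Filter.EventuallyLE, ae_restrict_iff' measurableSet_Ioc]
        apply Filter.Eventually.of_forall
        intro t ht
        have : (0:ℝ) ≤ t := le_of_lt ht.1
        positivity
      have hlint := (ofReal_integral_eq_lintegral_ofReal hint hnn).symm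
      have hval : ∫ t in Ioc (0:ℝ) m, vs * ((d:ℝ) * t ^ (d-1)) = vs * m ^ d := by
        rw [← intervalIntegral.integral_of_le hm0]
        have heq : ∀ t : ℝ, vs * ((d:ℝ) * t ^ (d-1)) = (vs * (d:ℝ)) * t ^ (d-1) := by
          intro t; ring
        simp_rw [heq]
        rw [intervalIntegral.integral_const_mul, integral_pow]
        have hdd : d - 1 + 1 = d := Nat.sub_add_cancel hd
        rw [hdd]
        have h0 : (0:ℝ) ^ d = 0 := zero_pow hd.ne'
        rw [h0]
        have hdne : (d:ℝ) ≠ 0 := Nat.cast_ne_zero.mpr hd.ne'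
        push_cast [hdd]
        field_simp
        rw [Nat.cast_sub hd]; push_cast; ring
      have hbridge : ∫⁻ t in Ioc (0:ℝ) m, (dens t : ENNReal) =
          ∫⁻ t in Ioc (0:ℝ) m, ENNReal.ofReal (vs * ((d:ℝ) * t ^ (d-1))) := rfl
      rw [hbridge, hlint, hval, hφ]
      simp only [not_lt.mpr hc, if_false]
      rw [mul_comm vs (m ^ d), ENNReal.ofReal_mul (pow_nonneg hm0 d), hvs,
        ENNReal.ofReal_toReal (sSet_vol_ne_top d)]
  haveI : IsFiniteMeasure μ := by
    constructor
    rw [hμ, Measure.map_apply hσ.measurable MeasurableSet.univ, Set.preimage_univ,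
      Measure.restrict_apply_univ]
    exact (sSet_isCompact d).measure_lt_top
  have hμρ : μ = ρ := MeasureTheory.Measure.ext_of_Iic μ ρ fun c => by rw [hμIic c, hρIic c]
  have step1 : ∫ l in sSet d, h (∑ i, l i) = ∫ x, h x ∂μ :=
    (integral_map hσ.measurable.aemeasurable hh.aestronglyMeasurable).symm
  rw [step1, hμρ, hρ, integral_withDensity_eq_integral_smul hdens_meas h]
  have step2 : ∫ t in Ioc (0:ℝ) 1, dens t • h t =
      ∫ t in Ioc (0:ℝ) 1, vs * ((d:ℝ) * t ^ (d-1)) * h t := by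
    apply setIntegral_congr_fun measurableSet_Ioc
    intro t ht
    have htnn : (0:ℝ) ≤ vs * ((d:ℝ) * t ^ (d-1)) := by
      have : (0:ℝ) ≤ t := le_of_lt ht.1
      positivity
    simp only [hdens, NNReal.smul_def, Real.coe_toNNReal _ htnn, smul_eq_mul]
  rw [step2, ← intervalIntegral.integral_of_le zero_le_one]

lemma sSet_convex (d : ℕ) : Convex ℝ (sSet d) := by
  intro x hx y hy α β hα hβ hαβ
  have happ : ∀ i, (α • x + β • y) i = α * x i + β * y i := fun i => rfl
  constructor
  · intro i
    rw [happ i]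
    exact add_nonneg (mul_nonneg hα (hx.1 i)) (mul_nonneg hβ (hy.1 i))
  · calc ∑ i, (α • x + β • y) i = α * ∑ i, x i + β * ∑ i, y i := by
          simp_rw [happ, Finset.sum_add_distrib, Finset.mul_sum]
    _ ≤ α * 1 + β * 1 := by
          apply add_le_add
          · exact mul_le_mul_of_nonneg_left hx.2 hα
          · exact mul_le_mul_of_nonneg_left hy.2 hβ
    _ = 1 := by rw [mul_one, mul_one, hαβ]

lemma sSet_vol_pos (d : ℕ) (hd : 0 < d) : 0 < (volume (sSet d)).toReal := by
  have hU : IsOpen {l : EuclideanSpace ℝ (Fin d) | (∀ i, 0 < l i) ∧ ∑ i, l i < 1} := by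
    have h1 : IsOpen {l : EuclideanSpace ℝ (Fin d) | ∀ i, 0 < l i} := by
      have : {l : EuclideanSpace ℝ (Fin d) | ∀ i, 0 < l i} = ⋂ i, {l | 0 < l i} := by
        ext l; simp
      rw [this]
      exact isOpen_iInter_of_finite fun i => isOpen_lt continuous_const (by fun_prop)
    have h2 : IsOpen {l : EuclideanSpace ℝ (Fin d) | ∑ i, l i < 1} :=
      isOpen_lt (by fun_prop) continuous_const
    exact h1.inter h2
  have hq : (WithLp.toLp 2 (fun _ => 1 / (2 * (d:ℝ))) : EuclideanSpace ℝ (Fin d)) ∈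
      {l : EuclideanSpace ℝ (Fin d) | (∀ i, 0 < l i) ∧ ∑ i, l i < 1} := by
    constructor
    · intro i
      have : (0:ℝ) < (d:ℝ) := by exact_mod_cast hd
      show (0:ℝ) < 1 / (2 * (d:ℝ))
      positivity
    · have hdpos : (0:ℝ) < (d:ℝ) := by exact_mod_cast hd
      show ∑ _i : Fin d, (1 / (2 * (d:ℝ))) < 1
      have : ∑ _i : Fin d, (1 / (2 * (d:ℝ))) = d * (1 / (2*d)) := by
        rw [Finset.sum_const, Finset.card_univ, Fintype.card_fin]
        simp [nsmul_eq_mul]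
      rw [this]
      rw [mul_one_div, div_lt_one (by positivity)]
      linarith
  have hsub : {l : EuclideanSpace ℝ (Fin d) | (∀ i, 0 < l i) ∧ ∑ i, l i < 1} ⊆ sSet d :=
    fun l hl => ⟨fun i => (hl.1 i).le, hl.2.le⟩
  have hpos : 0 < volume (sSet d) :=
    lt_of_lt_of_le (hU.measure_pos volume ⟨_, hq⟩) (measure_mono hsub)
  exact ENNReal.toReal_pos hpos.ne' (sSet_vol_ne_top d)

open Pointwise in
set_option maxHeartbeats 2000000 in
theorem stmt_14 (d : ℕ) (hd : 0 < d) (s r : ℝ) (hs : s < 0) (hr : r = -1 / s)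
    (hrd : (d : ℝ) < r)
    (g f : EuclideanSpace ℝ (Fin d) → ℝ)
    (hgconv : ConvexOn ℝ Set.univ g) (hgpos : ∀ x, 0 < g x)
    (hf : ∀ x, f x = g x ^ (-r))
    (hfdens : ∫ x, f x = 1)
    (p : Fin (d + 1) → EuclideanSpace ℝ (Fin d)) (hp : AffineIndependent ℝ p)
    (gbar : ℝ) (hgbar : gbar = (1 / (d : ℝ)) * ∑ i : Fin d, g (p i.succ))
    (hdom : gbar ≤ g (p 0)) :
    f (p 0) ≤ gbar ^ (-r) *
      (1 - (d : ℝ) / r + ((d : ℝ) / r) *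
        ((volume (convexHull ℝ (Set.range p))).toReal * gbar ^ (-r)) /
          (∫ y in convexHull ℝ (Set.range p), f y)) ^ (-r) := by
  classical
  haveI : NeZero d := ⟨hd.ne'⟩
  haveI : Nonempty (Fin d) := ⟨⟨0, hd⟩⟩
  set a : ℝ := g (p 0) with ha
  have hr0 : (0:ℝ) < r := lt_of_le_of_lt (Nat.cast_nonneg d) hrd
  have hdR : (0:ℝ) < (d:ℝ) := by exact_mod_cast hd
  have hdr1 : 0 < 1 - (d:ℝ)/r := by
    rw [sub_pos, div_lt_one hr0]; exact hrd
  have hdrnn : 0 ≤ (d:ℝ)/r := div_nonneg hdR.le hr0.le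
  have hbpos : 0 < gbar := by
    rw [hgbar]
    apply mul_pos (by positivity)
    exact Finset.sum_pos (fun i _ => hgpos _) Finset.univ_nonempty
  have hab : gbar ≤ a := hdom
  have hapos : 0 < a := hgpos _
  have hgcont : Continuous g := by
    rw [← continuousOn_univ]
    exact hgconv.continuousOn isOpen_univ
  have hfeq : f = fun x => g x ^ (-r) := funext hf
  have hfcont : Continuous f := by
    rw [hfeq]
    exact hgcont.rpow_const fun x => Or.inl (hgpos x).ne'
  -- the linear map
  set v : Fin d → EuclideanSpace ℝ (Fin d) := fun i => p i.succ - p 0 with hv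
  set Mlin : EuclideanSpace ℝ (Fin d) →ₗ[ℝ] EuclideanSpace ℝ (Fin d) :=
    { toFun := fun l => ∑ i, l i • v i
      map_add' := fun x y => by
        simp only [PiLp.add_apply, add_smul, Finset.sum_add_distrib]
      map_smul' := fun c x => by
        simp only [PiLp.smul_apply, smul_eq_mul, RingHom.id_apply, Finset.smul_sum, smul_smul] }
    with hMlin
  have hMapp : ∀ l, Mlin l = ∑ i, l i • v i := fun _ => rfl
  have hliv : LinearIndependent ℝ v := by
    have hli0 := (affineIndependent_iff_linearIndependent_vsub ℝ p 0).mp hp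
    have hinj : Function.Injective (fun i : Fin d =>
        (⟨i.succ, Fin.succ_ne_zero i⟩ : {x : Fin (d+1) // x ≠ 0})) := by
      intro i j hij
      have h1 : (i.succ : Fin (d+1)) = j.succ := congrArg Subtype.val hij
      exact Fin.succ_injective d h1
    have h2 := hli0.comp _ hinj
    have h3 : ((fun i : {x : Fin (d+1) // x ≠ 0} => p ↑i -ᵥ p 0) ∘
        (fun i : Fin d => (⟨i.succ, Fin.succ_ne_zero i⟩ : {x : Fin (d+1) // x ≠ 0}))) = v := by
      funext i
      simp [hv, vsub_eq_sub]
    rwa [h3] at h2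
  have hMinj : Function.Injective Mlin := by
    rw [← LinearMap.ker_eq_bot, LinearMap.ker_eq_bot']
    intro l hl
    have hsum : ∑ i, l i • v i = 0 := by rw [← hMapp l]; exact hl
    have hz := Fintype.linearIndependent_iff.mp hliv (fun i => l i) hsum
    ext i
    simpa using hz i
  have hMdet : Mlin.det ≠ 0 := by
    have hMsurj : Function.Surjective Mlin := (LinearMap.injective_iff_surjective).mp hMinj
    have hMbij : Function.Bijective Mlin := ⟨hMinj, hMsurj⟩
    have hunit := LinearEquiv.isUnit_det' (LinearEquiv.ofBijective Mlin hMbij)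
    have heq : ((LinearEquiv.ofBijective Mlin hMbij :
        EuclideanSpace ℝ (Fin d) ≃ₗ[ℝ] EuclideanSpace ℝ (Fin d)) :
        EuclideanSpace ℝ (Fin d) →ₗ[ℝ] EuclideanSpace ℝ (Fin d)) = Mlin := rfl
    rw [heq] at hunit
    exact hunit.ne_zero
  set D : ℝ := |Mlin.det| with hD
  have hDpos : 0 < D := abs_pos.mpr hMdet
  set Mc : EuclideanSpace ℝ (Fin d) →L[ℝ] EuclideanSpace ℝ (Fin d) :=
    LinearMap.toContinuousLinearMap Mlin with hMcdef
  have hMc : ∀ l, Mc l = Mlin l := fun _ => rfl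
  have hMcdet : Mc.det = Mlin.det := by
    show LinearMap.det _ = _
    rw [LinearMap.coe_toContinuousLinearMap]
  set T : EuclideanSpace ℝ (Fin d) → EuclideanSpace ℝ (Fin d) := fun l => p 0 + Mc l with hT
  have hTcont : Continuous T := continuous_const.add Mc.continuous
  have hTinj : Set.InjOn T (sSet d) := by
    intro x _ y _ hxy
    exact hMinj (add_left_cancel hxy)
  have hCoV : ∀ φ : EuclideanSpace ℝ (Fin d) → ℝ,
      ∫ x in T '' sSet d, φ x = ∫ l in sSet d, D • φ (T l) := by
    intro φ
    have := integral_image_eq_integral_abs_det_fderiv_smul volume (sSet_meas d)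
      (fun l _ => ((Mc.hasFDerivAt).const_add (p 0)).hasFDerivWithinAt) hTinj φ
    simpa [hMcdet] using this
  have hTcomb : ∀ l : EuclideanSpace ℝ (Fin d),
      T l = (1 - ∑ i, l i) • p 0 + ∑ i, l i • p i.succ := by
    intro l
    show p 0 + Mc l = _
    rw [hMc l, hMapp l]
    have h1 : ∑ i, l i • v i = (∑ i, l i • p i.succ) - (∑ i, l i) • p 0 := by
      rw [hv]
      simp only [smul_sub]
      rw [Finset.sum_sub_distrib, Finset.sum_smul]
    rw [h1, sub_smul, one_smul]
    abel
  have hTS : T '' sSet d = convexHull ℝ (Set.range p) := by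
    apply Set.Subset.antisymm
    · rintro x ⟨l, hl, rfl⟩
      rw [hTcomb l]
      have hmem : ∀ i : Fin (d+1), p i ∈ convexHull ℝ (Set.range p) :=
        fun i => subset_convexHull ℝ _ (Set.mem_range_self i)
      set w : Fin (d+1) → ℝ := Fin.cases (1 - ∑ i, l i) (fun j => l j) with hwdef
      have hw0 : ∀ i, 0 ≤ w i := by
        intro i
        induction i using Fin.cases with
        | zero => rw [hwdef]; simpa using sub_nonneg.mpr hl.2
        | succ j => rw [hwdef]; simpa using hl.1 j
      have hw1 : ∑ i, w i = 1 := by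
        rw [Fin.sum_univ_succ, hwdef]
        simp
      have hpt : (1 - ∑ i, l i) • p 0 + ∑ i : Fin d, l i • p i.succ =
          ∑ i : Fin (d+1), w i • p i := by
        rw [Fin.sum_univ_succ, hwdef]
        simp
      rw [hpt]
      exact (convex_convexHull ℝ (Set.range p)).sum_mem (fun i _ => hw0 i) hw1
        (fun i _ => hmem i)
    · apply convexHull_min
      · rintro x ⟨i, rfl⟩
        induction i using Fin.cases with
        | zero =>
          refine ⟨0, ⟨fun i => by simp, by simp⟩, ?_⟩
          show p 0 + Mc 0 = p 0
          rw [map_zero, add_zero]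
        | succ j =>
          refine ⟨EuclideanSpace.single j 1, ⟨?_, ?_⟩, ?_⟩
          · intro i
            rw [EuclideanSpace.single_apply]
            split <;> norm_num
          · have : ∀ i, (EuclideanSpace.single j (1:ℝ)) i = if i = j then 1 else 0 :=
              fun i => EuclideanSpace.single_apply j 1 i
            rw [Finset.sum_congr rfl (fun i _ => this i)]
            simp
          · show p 0 + Mc (EuclideanSpace.single j 1) = p j.succ
            rw [hMc, hMapp]
            have hsingle : ∑ i, (EuclideanSpace.single j (1:ℝ)) i • v i = v j := by
              rw [Finset.sum_eq_single j]
              · rw [EuclideanSpace.single_apply]; simp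
              · intro i _ hij
                rw [EuclideanSpace.single_apply]
                simp [hij]
              · intro hj; exact absurd (Finset.mem_univ j) hj
            rw [hsingle, hv]
            rw [add_comm]
            exact sub_add_cancel _ _
      · have himg : T '' sSet d = (fun x => p 0 + x) '' (⇑Mlin '' sSet d) := by
          rw [Set.image_image]
          exact Set.image_congr' (fun l => rfl)
        rw [himg]
        exact ((sSet_convex d).linear_image Mlin).translate (p 0)
  set vs : ℝ := (volume (sSet d)).toReal with hvs
  have hvs0 : 0 < vs := sSet_vol_pos d hd
  have hVol : (volume (convexHull ℝ (Set.range p))).toReal = D * vs := by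
    have h1 := hCoV (fun _ => (1:ℝ))
    rw [hTS] at h1
    simp only [smul_eq_mul, mul_one] at h1
    rw [setIntegral_const, setIntegral_const, smul_eq_mul, mul_one, smul_eq_mul, mul_comm] at h1
    exact h1
  -- functions on the simplex
  set c' : Fin d → ℝ := fun j => g (p j.succ) with hc'
  have hsumc : ∑ j, c' j = d * gbar := by
    rw [hgbar]
    field_simp
  set Ak : Fin d → EuclideanSpace ℝ (Fin d) → ℝ :=
    fun k l => (1 - ∑ i, l i) * a + ∑ i, l i * c' (i + k) with hAk
  set mm : ℝ := min a (Finset.univ.inf' Finset.univ_nonempty c') with hmm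
  have hmmpos : 0 < mm := by
    apply lt_min hapos
    rw [Finset.lt_inf'_iff]
    exact fun j _ => hgpos _
  have hAge : ∀ k, ∀ l ∈ sSet d, mm ≤ Ak k l := by
    intro k l hl
    have h1 : ∑ i, l i * mm ≤ ∑ i, l i * c' (i + k) := by
      apply Finset.sum_le_sum
      intro i _
      apply mul_le_mul_of_nonneg_left _ (hl.1 i)
      exact le_trans (min_le_right _ _) (Finset.inf'_le _ (Finset.mem_univ (i+k)))
    have h2 : (1 - ∑ i, l i) * mm ≤ (1 - ∑ i, l i) * a :=
      mul_le_mul_of_nonneg_left (min_le_left _ _) (sub_nonneg.mpr hl.2)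
    have h3 : ∑ i, l i * mm = (∑ i, l i) * mm := by rw [← Finset.sum_mul]
    have h4 : (1 - ∑ i, l i) * mm + (∑ i, l i) * mm = mm := by ring
    show mm ≤ (1 - ∑ i, l i) * a + ∑ i, l i * c' (i + k)
    linarith [h1, h2, h3, h4]
  have hApos : ∀ k, ∀ l ∈ sSet d, 0 < Ak k l := fun k l hl => lt_of_lt_of_le hmmpos (hAge k l hl)
  have hAkcont : ∀ k, ContinuousOn (fun l => Ak k l ^ (-r)) (sSet d) := by
    intro k
    apply ContinuousOn.rpow_const
    · apply Continuous.continuousOn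
      apply Continuous.add
      · exact (continuous_const.sub (by fun_prop)).mul continuous_const
      · apply continuous_finset_sum
        intro i _
        exact (by fun_prop : Continuous fun l : EuclideanSpace ℝ (Fin d) => l i).mul continuous_const
    · exact fun l hl => Or.inl (hApos k l hl).ne'
  have hint_k : ∀ k, IntegrableOn (fun l => Ak k l ^ (-r)) (sSet d) volume :=
    fun k => (hAkcont k).integrableOn_compact' (sSet_isCompact d) (sSet_meas d)
  set ΨI : Fin d → ℝ := fun k => ∫ l in sSet d, (Ak k l) ^ (-r) with hΨI
  have hperm : ∀ k, ΨI k = ΨI 0 := by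
    intro k
    set e : EuclideanSpace ℝ (Fin d) ≃ₗᵢ[ℝ] EuclideanSpace ℝ (Fin d) :=
      LinearIsometryEquiv.piLpCongrLeft 2 ℝ ℝ (Equiv.addRight k) with he
    have hfin1 : ∀ i : Fin d, i + k - k = i := fun i => add_sub_cancel_right i k
    have hfin2 : ∀ i : Fin d, i - k + k = i := fun i => sub_add_cancel i k
    have happ : ∀ (l : EuclideanSpace ℝ (Fin d)) (i : Fin d), e l i = l (i - k) := by
      intro l i
      rw [he]
      rw [LinearIsometryEquiv.piLpCongrLeft_apply, Equiv.piCongrLeft'_apply]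
      simp [sub_eq_add_neg]
    have hsum_e : ∀ l : EuclideanSpace ℝ (Fin d), ∑ i, e l i = ∑ i, l i := by
      intro l
      simp_rw [happ]
      exact Fintype.sum_equiv (Equiv.subRight k) _ _ (fun i => rfl)
    have hpre : ⇑e ⁻¹' (sSet d) = sSet d := by
      ext l
      simp only [Set.mem_preimage, sSet, Set.mem_setOf_eq]
      constructor
      · rintro ⟨h1, h2⟩
        refine ⟨fun i => ?_, by rw [hsum_e] at h2; exact h2⟩
        have h3 := h1 (i + k)
        rw [happ] at h3
        rw [hfin1 i] at h3
        exact h3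
      · rintro ⟨h1, h2⟩
        exact ⟨fun i => by rw [happ]; exact h1 _, by rw [hsum_e]; exact h2⟩
    have hcomp : ∀ l, Ak 0 (e l) = Ak k l := by
      intro l
      show (1 - ∑ i, e l i) * a + ∑ i, e l i * c' (i + 0) =
        (1 - ∑ i, l i) * a + ∑ i, l i * c' (i + k)
      rw [hsum_e]
      congr 1
      simp_rw [happ, add_zero]
      exact (Fintype.sum_equiv (Equiv.addRight k) (fun j => l j * c' (j + k))
        (fun i => l (i - k) * c' i) (fun j => by
          simp only [Equiv.coe_addRight]
          rw [hfin1 j])).symm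
    have hmp := LinearIsometryEquiv.measurePreserving e
    have hemb : MeasurableEmbedding (⇑e) :=
      e.toHomeomorph.toMeasurableEquiv.measurableEmbedding
    have hkey := hmp.setIntegral_preimage_emb hemb (fun l => Ak 0 l ^ (-r)) (sSet d)
    rw [hpre] at hkey
    calc ΨI k = ∫ l in sSet d, Ak 0 (e l) ^ (-r) := by
          rw [hΨI]
          apply setIntegral_congr_fun (sSet_meas d)
          intro x _
          simp only [hcomp]
      _ = ΨI 0 := hkey
  -- clamped one-dimensional profile
  set cl : ℝ → ℝ := fun u => max 0 (min u 1) with hcl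
  have hclcont : Continuous cl := continuous_const.max (continuous_id.min continuous_const)
  have hcl01 : ∀ u, 0 ≤ cl u ∧ cl u ≤ 1 := by
    intro u
    constructor
    · exact le_max_left _ _
    · apply max_le (by norm_num)
      exact min_le_right _ _
  have hcleq : ∀ u, 0 ≤ u → u ≤ 1 → cl u = u := by
    intro u h0 h1
    rw [hcl]
    simp only [min_eq_left h1, max_eq_right h0]
  set h0 : ℝ → ℝ := fun u => ((1 - cl u) * a + cl u * gbar) ^ (-r) with hh0
  have hbase_ge : ∀ u, gbar ≤ (1 - cl u) * a + cl u * gbar := by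
    intro u
    obtain ⟨h1, h2⟩ := hcl01 u
    nlinarith
  have hh0cont : Continuous h0 := by
    apply Continuous.rpow_const
    · exact ((continuous_const.sub hclcont).mul continuous_const).add
        (hclcont.mul continuous_const)
    · exact fun u => Or.inl (lt_of_lt_of_le hbpos (hbase_ge u)).ne'
  have hJensen : ∀ l ∈ sSet d, h0 (∑ i, l i) ≤ ∑ k, (1/(d:ℝ)) * (Ak k l) ^ (-r) := by
    intro l hl
    have hsl0 : 0 ≤ ∑ i, l i := Finset.sum_nonneg fun i _ => hl.1 i
    have hwsum : ∑ _k : Fin d, (1/(d:ℝ)) = 1 := by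
      rw [Finset.sum_const, Finset.card_univ, Fintype.card_fin, nsmul_eq_mul]
      field_simp
    have hmap := (convexOn_rpow_neg hr0.le).map_sum_le
      (fun (k : Fin d) (_ : k ∈ Finset.univ) => by positivity) hwsum
      (fun k _ => Set.mem_Ioi.mpr (hApos k l hl))
    have hck : ∀ i : Fin d, ∑ k, c' (i + k) = (d:ℝ) * gbar := by
      intro i
      rw [← hsumc]
      exact Fintype.sum_equiv (Equiv.addLeft i) _ _ (fun k => rfl)
    have hsum_k : ∑ k, (1/(d:ℝ)) • Ak k l = (1 - ∑ i, l i) * a + (∑ i, l i) * gbar := by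
      simp_rw [smul_eq_mul]
      rw [← Finset.mul_sum]
      have h2 : ∑ k, Ak k l = (d:ℝ) * ((1 - ∑ i, l i) * a) + (∑ i, l i) * ((d:ℝ) * gbar) := by
        show ∑ k, ((1 - ∑ i, l i) * a + ∑ i, l i * c' (i + k)) = _
        rw [Finset.sum_add_distrib, Finset.sum_const, Finset.card_univ, Fintype.card_fin,
          nsmul_eq_mul]
        congr 1
        rw [Finset.sum_comm]
        have h3 : ∀ i, ∑ k, l i * c' (i + k) = l i * ((d:ℝ)*gbar) := by
          intro i
          rw [← Finset.mul_sum, hck i]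
        rw [Finset.sum_congr rfl fun i _ => h3 i, ← Finset.sum_mul]
      rw [h2]
      field_simp
    rw [hsum_k] at hmap
    have hval : h0 (∑ i, l i) = ((1 - ∑ i, l i) * a + (∑ i, l i) * gbar) ^ (-r) := by
      show ((1 - cl (∑ i, l i)) * a + cl (∑ i, l i) * gbar) ^ (-r) = _
      rw [hcleq _ hsl0 hl.2]
    rw [hval]
    exact hmap
  -- chain of inequalities
  set J : ℝ := ∫ t in (0:ℝ)..1, (d:ℝ) * t ^ (d-1) * ((1-t)*a + t*gbar) ^ (-r) with hJ
  have hslice : ∫ l in sSet d, h0 (∑ i, l i) = vs * J := by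
    rw [sSet_slice d hd h0 hh0cont, hJ, ← intervalIntegral.integral_const_mul]
    apply intervalIntegral.integral_congr
    intro t ht
    rw [Set.uIcc_of_le (by norm_num : (0:ℝ) ≤ 1)] at ht
    show vs * ((d:ℝ) * t ^ (d-1)) * h0 t = vs * ((d:ℝ) * t ^ (d-1) * ((1-t)*a + t*gbar) ^ (-r))
    have : h0 t = ((1-t)*a + t*gbar) ^ (-r) := by
      show ((1 - cl t) * a + cl t * gbar) ^ (-r) = _
      rw [hcleq t ht.1 ht.2]
    rw [this]
    ring
  have hn2 : ∫ l in sSet d, h0 (∑ i, l i) ≤ ΨI 0 := by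
    have hintsum : IntegrableOn (fun l => ∑ k, (1/(d:ℝ)) * Ak k l ^ (-r)) (sSet d) volume := by
      apply integrable_finset_sum
      intro k _
      exact ((hint_k k).const_mul _)
    have h1 : ∫ l in sSet d, h0 (∑ i, l i) ≤
        ∫ l in sSet d, ∑ k, (1/(d:ℝ)) * Ak k l ^ (-r) := by
      apply setIntegral_mono_on _ hintsum (sSet_meas d) hJensen
      exact ((hh0cont.comp (by fun_prop : Continuous fun l : EuclideanSpace ℝ (Fin d) =>
        ∑ i, l i)).continuousOn.integrableOn_compact' (sSet_isCompact d) (sSet_meas d))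
    have h2 : ∫ l in sSet d, ∑ k, (1/(d:ℝ)) * Ak k l ^ (-r) = ∑ k, (1/(d:ℝ)) * ΨI k := by
      rw [integral_finset_sum _ (fun k _ => (hint_k k).const_mul _)]
      apply Finset.sum_congr rfl
      intro k _
      rw [MeasureTheory.integral_const_mul]
    have h3 : ∑ k, (1/(d:ℝ)) * ΨI k = ΨI 0 := by
      rw [Finset.sum_congr rfl (fun k _ => by rw [hperm k])]
      rw [Finset.sum_const, Finset.card_univ, Fintype.card_fin, nsmul_eq_mul]
      field_simp
    rw [h2, h3] at h1
    exact h1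
  have hn1 : ΨI 0 ≤ ∫ l in sSet d, f (T l) := by
    apply setIntegral_mono_on (hint_k 0)
      ((hfcont.comp hTcont).continuousOn.integrableOn_compact' (sSet_isCompact d) (sSet_meas d))
      (sSet_meas d)
    intro l hl
    have hgT : g (T l) ≤ Ak 0 l := by
      set w : Fin (d+1) → ℝ := Fin.cases (1 - ∑ i, l i) (fun j => l j) with hwdef
      have hw0 : ∀ i, 0 ≤ w i := by
        intro i
        induction i using Fin.cases with
        | zero => rw [hwdef]; simpa using sub_nonneg.mpr hl.2
        | succ j => rw [hwdef]; simpa using hl.1 j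
      have hw1 : ∑ i, w i = 1 := by
        rw [Fin.sum_univ_succ, hwdef]
        simp
      have hcomb := hgconv.map_sum_le (fun i (_ : i ∈ Finset.univ) => hw0 i) hw1
        (fun i _ => Set.mem_univ (p i))
      have hpt : ∑ i : Fin (d+1), w i • p i = T l := by
        rw [Fin.sum_univ_succ, hwdef, hTcomb l]
        simp
      have hval : ∑ i : Fin (d+1), w i * g (p i) = Ak 0 l := by
        rw [Fin.sum_univ_succ, hwdef]
        show (1 - ∑ i, l i) * g (p 0) + ∑ j : Fin d, l j * g (p j.succ) =
          (1 - ∑ i, l i) * a + ∑ i, l i * c' (i + 0)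
        simp only [add_zero]
        rfl
      simp only [smul_eq_mul] at hcomb
      rw [hpt, hval] at hcomb
      exact hcomb
    show Ak 0 l ^ (-r) ≤ f (T l)
    rw [hf]
    exact Real.rpow_le_rpow_of_nonpos (hgpos _) hgT (by linarith)
  set ν : ℝ := ∫ y in convexHull ℝ (Set.range p), f y with hν
  have hνeq : ν = D * ∫ l in sSet d, f (T l) := by
    rw [hν, ← hTS, hCoV f]
    simp only [smul_eq_mul]
    rw [MeasureTheory.integral_const_mul]
  have hJlb : a ^ (-r) ≤ J := by
    rw [hJ]
    have heval : ∫ t in (0:ℝ)..1, (d:ℝ) * t ^ (d-1) * a ^ (-r) = a ^ (-r) := by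
      simp_rw [mul_assoc]
      rw [intervalIntegral.integral_const_mul, intervalIntegral.integral_mul_const, integral_pow]
      have hdd : d - 1 + 1 = d := Nat.sub_add_cancel hd
      rw [one_pow, zero_pow (by omega : d - 1 + 1 ≠ 0)]
      have hcast : ((d - 1 : ℕ):ℝ) + 1 = (d:ℝ) := by
        rw [Nat.cast_sub hd]
        push_cast
        ring
      rw [hcast]
      field_simp
      norm_num
    rw [← heval]
    have hconta : Continuous (fun t : ℝ => (d:ℝ) * t ^ (d-1) * a ^ (-r)) := by fun_prop
    have hcontb : ContinuousOn (fun t : ℝ => (d:ℝ) * t ^ (d-1) * ((1-t)*a + t*gbar) ^ (-r))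
        (Set.Icc 0 1) := by
      apply ContinuousOn.mul (by fun_prop)
      apply ContinuousOn.rpow_const (by fun_prop)
      intro t ht
      left
      have e1 : (1-t)*gbar ≤ (1-t)*a := mul_le_mul_of_nonneg_left hab (by linarith [ht.2])
      have e2 : (1-t)*gbar + t*gbar = gbar := by ring
      have e3 : 0 ≤ t*gbar := mul_nonneg ht.1 hbpos.le
      have : 0 < (1-t)*a + t*gbar := by linarith [e1, e2, hbpos]
      exact this.ne'
    apply intervalIntegral.integral_mono_on (by norm_num)
    · exact hconta.intervalIntegrable _ _
    · exact (hcontb.mono (by rw [Set.uIcc_of_le] <;> norm_num)).intervalIntegrable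
    · intro t ht
      have e1 : (1-t)*gbar ≤ (1-t)*a := mul_le_mul_of_nonneg_left hab (by linarith [ht.2])
      have e2 : (1-t)*gbar + t*gbar = gbar := by ring
      have hbase_pos : 0 < (1-t)*a + t*gbar := by linarith [e1, e2, hbpos]
      have e3 : t*gbar ≤ t*a := mul_le_mul_of_nonneg_left hab ht.1
      have e4 : (1-t)*a + t*a = a := by ring
      have hbase_le : (1-t)*a + t*gbar ≤ a := by linarith [e3, e4]
      have hstep := Real.rpow_le_rpow_of_nonpos hbase_pos hbase_le (by linarith : -r ≤ 0)
      have hnn : 0 ≤ (d:ℝ) * t ^ (d-1) := mul_nonneg hdR.le (pow_nonneg ht.1 _)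
      exact mul_le_mul_of_nonneg_left hstep hnn
  have hJpos : 0 < J := lt_of_lt_of_le (Real.rpow_pos_of_pos hapos _) hJlb
  have hνge : D * vs * J ≤ ν := by
    rw [hνeq]
    have : vs * J ≤ ∫ l in sSet d, f (T l) := by
      rw [← hslice]
      exact le_trans hn2 hn1
    calc D * vs * J = D * (vs * J) := by ring
      _ ≤ D * ∫ l in sSet d, f (T l) := mul_le_mul_of_nonneg_left this hDpos.le
  have hνpos : 0 < ν := lt_of_lt_of_le (mul_pos (mul_pos hDpos hvs0) hJpos) hνge
  -- final algebra
  have hX : 0 ≤ a - (1 - (d:ℝ)/r) * gbar := by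
    have h1 : (1 - (d:ℝ)/r) * gbar ≤ 1 * gbar :=
      mul_le_mul_of_nonneg_right (by linarith) hbpos.le
    rw [one_mul] at h1
    linarith
  have hKEY : ((d:ℝ)/r) * gbar ^ (1-r) * (D * vs) ≤ ν * (a - (1 - (d:ℝ)/r) * gbar) := by
    have h1 := oneD d hd r a gbar hrd hbpos hab
    calc ((d:ℝ)/r) * gbar ^ (1-r) * (D * vs) ≤ (J * (a - (1 - (d:ℝ)/r)*gbar)) * (D * vs) := by
          apply mul_le_mul_of_nonneg_right h1 (by positivity)
      _ = (D * vs * J) * (a - (1 - (d:ℝ)/r)*gbar) := by ring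
      _ ≤ ν * (a - (1 - (d:ℝ)/r)*gbar) := mul_le_mul_of_nonneg_right hνge hX
  have hb1r : gbar ^ ((1:ℝ)-r) = gbar * gbar ^ (-r) := by
    rw [show (1:ℝ)-r = 1 + -r by ring, Real.rpow_add hbpos, Real.rpow_one]
  set B : ℝ := 1 - (d:ℝ)/r + ((d:ℝ)/r) *
      ((volume (convexHull ℝ (Set.range p))).toReal * gbar ^ (-r)) / ν with hB
  have hBterm : 0 ≤ ((d:ℝ)/r) *
      ((volume (convexHull ℝ (Set.range p))).toReal * gbar ^ (-r)) / ν := by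
    apply div_nonneg _ hνpos.le
    apply mul_nonneg hdrnn
    exact mul_nonneg ENNReal.toReal_nonneg (Real.rpow_nonneg hbpos.le _)
  have hBpos : 0 < B := by rw [hB]; linarith
  have hbB : gbar * B ≤ a := by
    have hdiv : ((d:ℝ)/r) *
        ((volume (convexHull ℝ (Set.range p))).toReal * gbar ^ (-r)) / ν * gbar ≤
        a - (1 - (d:ℝ)/r) * gbar := by
      rw [div_mul_eq_mul_div, div_le_iff₀ hνpos]
      calc ((d:ℝ)/r) * ((volume (convexHull ℝ (Set.range p))).toReal * gbar ^ (-r)) * gbar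
          = ((d:ℝ)/r) * gbar ^ (1-r) * (D * vs) := by
            rw [hVol, hb1r]; ring
        _ ≤ ν * (a - (1 - (d:ℝ)/r) * gbar) := hKEY
        _ = (a - (1 - (d:ℝ)/r) * gbar) * ν := by ring
    have hexp : gbar * B = (1 - (d:ℝ)/r) * gbar +
        ((d:ℝ)/r) * ((volume (convexHull ℝ (Set.range p))).toReal * gbar ^ (-r)) / ν * gbar := by
      rw [hB]; ring
    rw [hexp]
    linarith [hdiv]
  calc f (p 0) = a ^ (-r) := by rw [hf]
    _ ≤ (gbar * B) ^ (-r) :=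
        Real.rpow_le_rpow_of_nonpos (mul_pos hbpos hBpos) hbB (by linarith)
    _ = gbar ^ (-r) * B ^ (-r) := Real.mul_rpow hbpos.le hBpos.le
end
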